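/- In an AUAI approximation system, (X ∩ Y)^{l2} = X^{l2} ∩ Y^{l2} for all subsets X, Y of S. -/
import Mathlib


open Set

/-- AU-lower approximation: union of all cover elements included in `X`. -/
def AUlower {α : Type*} {n : ℕ} (K : Fin (n + 2) → Set α) (X : Set α) : Set α :=
  ⋃₀ {A | ∃ i : Fin (n + 2), A = K i ∧ K i ⊆ X}

/-- AU-upper approximation: intersection of all unions of cover elements covering `X`. -/
def AUupper {α : Type*} {n : ℕ} (K : Fin (n + 2) → Set α) (X : Set α) : Set α :=
  ⋂₀ {A | ∃ I : Set (Fin (n + 2)), A = (⋃ i ∈ I, K i) ∧ X ⊆ A}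

/-- AI-lower approximation: union of all intersections of complements included in `X`. -/
def AIlower {α : Type*} {n : ℕ} (K : Fin (n + 2) → Set α) (X : Set α) : Set α :=
  ⋃₀ {A | ∃ I : Set (Fin (n + 2)), A = (⋂ i ∈ I, (K i)ᶜ) ∧ A ⊆ X}

/-- AI-upper approximation: intersection of all complements of cover elements containing `X`. -/
def AIupper {α : Type*} {n : ℕ} (K : Fin (n + 2) → Set α) (X : Set α) : Set α :=
  ⋂₀ {A | ∃ i : Fin (n + 2), A = (K i)ᶜ ∧ X ⊆ (K i)ᶜ}

theorem stmt2 {α : Type*} {n : ℕ} (K : Fin (n + 2) → Set α)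
    (hK0 : K 0 = ∅) (hKtop : K (Fin.last (n + 1)) = Set.univ) (X Y : Set α) :
    AIlower K (X ∩ Y) = AIlower K X ∩ AIlower K Y := by
  ext x
  constructor
  · rintro ⟨A, ⟨I, rfl, hA⟩, hx⟩
    exact ⟨⟨_, ⟨I, rfl, hA.trans inter_subset_left⟩, hx⟩,
           ⟨_, ⟨I, rfl, hA.trans inter_subset_right⟩, hx⟩⟩
  · rintro ⟨⟨A, ⟨I, rfl, hA⟩, hxA⟩, ⟨B, ⟨J, rfl, hB⟩, hxB⟩⟩
    refine ⟨⋂ i ∈ I ∪ J, (K i)ᶜ, ⟨I ∪ J, rfl, ?_⟩, ?_⟩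
    · have : (⋂ i ∈ I ∪ J, (K i)ᶜ) = (⋂ i ∈ I, (K i)ᶜ) ∩ ⋂ i ∈ J, (K i)ᶜ :=
        biInter_union I J _
      rw [this]
      exact fun z hz => ⟨hA hz.1, hB hz.2⟩
    · simp only [mem_iInter, mem_compl_iff]
      rintro i (hi | hi)
      · exact by simpa using (mem_iInter₂.mp hxA) i hi
      · exact by simpa using (mem_iInter₂.mp hxB) i hi
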